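/- Let f_α(x) = (1/(1−α))·log₂[((1−√(1−x²))/2)^α + ((1+√(1−x²))/2)^α]. For α ≥ 2 and x, y ≥ 0 with x² + y² ≤ 1, f_α(√(x²+y²)) ≥ f_α(x) + f_α(y). -/

import Mathlib

open Real Set

private lemma hd_sinh (c x : ℝ) : HasDerivAt (fun t : ℝ => Real.sinh (c*t)) (c * Real.cosh (c*x)) x := by
  simpa [mul_comm, Function.comp_def] using (Real.hasDerivAt_sinh (c*x)).comp x ((hasDerivAt_id x).const_mul c)

private lemma hd_cosh (c x : ℝ) : HasDerivAt (fun t : ℝ => Real.cosh (c*t)) (c * Real.sinh (c*x)) x := by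
  simpa [mul_comm, Function.comp_def] using (Real.hasDerivAt_cosh (c*x)).comp x ((hasDerivAt_id x).const_mul c)

private lemma psi3 (β θ : ℝ) (hβ : 3 ≤ β) (hθ : 0 ≤ θ) :
    0 ≤ 6*β^3*Real.cosh (β*θ) - 2*(β-2)^3*Real.cosh ((β-2)*θ) - 27*(β-1)*Real.cosh (3*θ)
      - (β+7)*Real.cosh θ := by
  have h2 : Real.cosh ((β-2)*θ) ≤ Real.cosh (β*θ) := by
    apply Real.cosh_le_cosh.2
    rw [abs_of_nonneg (by nlinarith), abs_of_nonneg (by nlinarith)]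
    nlinarith
  have h3 : Real.cosh (3*θ) ≤ Real.cosh (β*θ) := by
    apply Real.cosh_le_cosh.2
    rw [abs_of_nonneg (by nlinarith), abs_of_nonneg (by nlinarith)]
    nlinarith
  have h1 : Real.cosh θ ≤ Real.cosh (β*θ) := by
    apply Real.cosh_le_cosh.2
    rw [abs_of_nonneg hθ, abs_of_nonneg (by nlinarith)]
    nlinarith
  have hc2 : 0 < Real.cosh ((β-2)*θ) := Real.cosh_pos _
  have hc3 : 0 < Real.cosh (3*θ) := Real.cosh_pos _
  have hc1 : 0 < Real.cosh θ := Real.cosh_pos _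
  have hcb : 0 < Real.cosh (β*θ) := Real.cosh_pos _
  have hcube : (0:ℝ) ≤ (β-2)^3 := pow_nonneg (by linarith) 3
  have hpoly : 0 ≤ 6*β^3 - 2*(β-2)^3 - 27*(β-1) - (β+7) := by nlinarith [sq_nonneg (β-3), sq_nonneg β]
  nlinarith [mul_le_mul_of_nonneg_left h2 (by linarith : (0:ℝ) ≤ 2*(β-2)^3),
    mul_le_mul_of_nonneg_left h3 (by linarith : (0:ℝ) ≤ 27*(β-1)),
    mul_le_mul_of_nonneg_left h1 (by linarith : (0:ℝ) ≤ β+7),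
    mul_nonneg hpoly hcb.le]

private lemma psi2 (β : ℝ) (hβ : 3 ≤ β) {θ : ℝ} (hθ : 0 ≤ θ) :
    0 ≤ 6*β^2*Real.sinh (β*θ) - 2*(β-2)^2*Real.sinh ((β-2)*θ) - 9*(β-1)*Real.sinh (3*θ)
      - (β+7)*Real.sinh θ := by
  set F : ℝ → ℝ := fun t => 6*β^2*Real.sinh (β*t) - 2*(β-2)^2*Real.sinh ((β-2)*t)
      - 9*(β-1)*Real.sinh (3*t) - (β+7)*Real.sinh t with hF
  have hmono : MonotoneOn F (Ici 0) := by
    apply monotoneOn_of_hasDerivWithinAt_nonneg (f' := fun t => 6*β^3*Real.cosh (β*t)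
        - 2*(β-2)^3*Real.cosh ((β-2)*t) - 27*(β-1)*Real.cosh (3*t) - (β+7)*Real.cosh t)
      (convex_Ici 0) (Continuous.continuousOn (by fun_prop))
    · intro x hx
      have H := ((((hd_sinh β x).const_mul (6*β^2)).sub
          ((hd_sinh (β-2) x).const_mul (2*(β-2)^2))).sub
          ((hd_sinh 3 x).const_mul (9*(β-1)))).sub
          ((Real.hasDerivAt_sinh x).const_mul (β+7))
      have H' : HasDerivAt F (6*β^3*Real.cosh (β*x) - 2*(β-2)^3*Real.cosh ((β-2)*x)
          - 27*(β-1)*Real.cosh (3*x) - (β+7)*Real.cosh x) x := by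
        exact H.congr_deriv (by ring)
      exact H'.hasDerivWithinAt
    · intro x hx
      rw [interior_Ici] at hx
      exact psi3 β x hβ (le_of_lt hx)
  have h0 : F 0 = 0 := by simp [hF]
  have hle := hmono self_mem_Ici (mem_Ici.2 hθ) hθ
  rw [h0] at hle
  simpa [hF] using hle

private lemma psi1 (β : ℝ) (hβ : 3 ≤ β) {θ : ℝ} (hθ : 0 ≤ θ) :
    0 ≤ 6*β*Real.cosh (β*θ) - 2*(β-2)*Real.cosh ((β-2)*θ) - 3*(β-1)*Real.cosh (3*θ)
      - (β+7)*Real.cosh θ := by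
  set F : ℝ → ℝ := fun t => 6*β*Real.cosh (β*t) - 2*(β-2)*Real.cosh ((β-2)*t)
      - 3*(β-1)*Real.cosh (3*t) - (β+7)*Real.cosh t with hF
  have hmono : MonotoneOn F (Ici 0) := by
    apply monotoneOn_of_hasDerivWithinAt_nonneg (f' := fun t => 6*β^2*Real.sinh (β*t)
        - 2*(β-2)^2*Real.sinh ((β-2)*t) - 9*(β-1)*Real.sinh (3*t) - (β+7)*Real.sinh t)
      (convex_Ici 0) (Continuous.continuousOn (by fun_prop))
    · intro x hx
      have H := ((((hd_cosh β x).const_mul (6*β)).sub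
          ((hd_cosh (β-2) x).const_mul (2*(β-2)))).sub
          ((hd_cosh 3 x).const_mul (3*(β-1)))).sub
          ((Real.hasDerivAt_cosh x).const_mul (β+7))
      have H' : HasDerivAt F (6*β^2*Real.sinh (β*x) - 2*(β-2)^2*Real.sinh ((β-2)*x)
          - 9*(β-1)*Real.sinh (3*x) - (β+7)*Real.sinh x) x := by
        exact H.congr_deriv (by ring)
      exact H'.hasDerivWithinAt
    · intro x hx
      rw [interior_Ici] at hx
      exact psi2 β hβ (le_of_lt hx)
  have h0 : F 0 = 0 := by
    simp [hF]
    ring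
  have hle := hmono self_mem_Ici (mem_Ici.2 hθ) hθ
  rw [h0] at hle
  simpa [hF] using hle

private lemma psi0 (β : ℝ) (hβ : 3 ≤ β) {θ : ℝ} (hθ : 0 ≤ θ) :
    0 ≤ 6*Real.sinh (β*θ) - 2*Real.sinh ((β-2)*θ) - (β-1)*Real.sinh (3*θ)
      - (β+7)*Real.sinh θ := by
  set F : ℝ → ℝ := fun t => 6*Real.sinh (β*t) - 2*Real.sinh ((β-2)*t)
      - (β-1)*Real.sinh (3*t) - (β+7)*Real.sinh t with hF
  have hmono : MonotoneOn F (Ici 0) := by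
    apply monotoneOn_of_hasDerivWithinAt_nonneg (f' := fun t => 6*β*Real.cosh (β*t)
        - 2*(β-2)*Real.cosh ((β-2)*t) - 3*(β-1)*Real.cosh (3*t) - (β+7)*Real.cosh t)
      (convex_Ici 0) (Continuous.continuousOn (by fun_prop))
    · intro x hx
      have H := ((((hd_sinh β x).const_mul 6).sub
          ((hd_sinh (β-2) x).const_mul 2)).sub
          ((hd_sinh 3 x).const_mul (β-1))).sub
          ((Real.hasDerivAt_sinh x).const_mul (β+7))
      have H' : HasDerivAt F (6*β*Real.cosh (β*x) - 2*(β-2)*Real.cosh ((β-2)*x)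
          - 3*(β-1)*Real.cosh (3*x) - (β+7)*Real.cosh x) x := by
        exact H.congr_deriv (by ring)
      exact H'.hasDerivWithinAt
    · intro x hx
      rw [interior_Ici] at hx
      exact psi1 β hβ (le_of_lt hx)
  have h0 : F 0 = 0 := by simp [hF]
  have hle := hmono self_mem_Ici (mem_Ici.2 hθ) hθ
  rw [h0] at hle
  simpa [hF] using hle

private lemma exp_merge (x y z : ℝ) (h : x + y = z) : Real.exp x * Real.exp y = Real.exp z := by
  rw [← Real.exp_add, h]

private lemma core_exp (α u v : ℝ) (hα : 2 ≤ α) (huv : u ≤ v) :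
    (α-1) * (Real.exp ((α-2)*u) + Real.exp ((α-2)*v)) * (Real.exp v - Real.exp u)
        * (Real.exp (α*u) + Real.exp (α*v))
      ≤ α * (Real.exp ((α-1)*v) - Real.exp ((α-1)*u))^2 * (Real.exp v - Real.exp u)
        + 2 * (Real.exp ((α-1)*v) - Real.exp ((α-1)*u))
          * (Real.exp (α*u) + Real.exp (α*v)) := by
  set a := Real.exp u with ha
  set b := Real.exp v with hb
  set c := Real.exp ((α-2)*u) with hc
  set d := Real.exp ((α-2)*v) with hd
  set M := Real.exp ((α-1/2)*(u+v)) with hM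
  set θ := (v-u)/2 with hθdef
  have key := psi0 (2*α-1) (by linarith) (θ := θ) (by rw [hθdef]; linarith)
  have hprod : 0 ≤ 2 * M * (6*Real.sinh ((2*α-1)*θ) - 2*Real.sinh ((2*α-1-2)*θ)
      - (2*α-1-1)*Real.sinh (3*θ) - (2*α-1+7)*Real.sinh θ) := by
    apply mul_nonneg (by positivity) key
  -- merge identities
  have m1 : M * Real.exp ((2*α-1)*θ) = d^2*b^3 := by
    simp only [hM, ha, hb, hc, hd, hθdef, pow_succ, pow_zero, one_mul, ← Real.exp_add]
    exact congrArg Real.exp (by ring)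
  have m2 : M * Real.exp (-((2*α-1)*θ)) = c^2*a^3 := by
    simp only [hM, ha, hb, hc, hd, hθdef, pow_succ, pow_zero, one_mul, ← Real.exp_add]
    exact congrArg Real.exp (by ring)
  have m3 : M * Real.exp ((2*α-1-2)*θ) = a*d^2*b^2 := by
    simp only [hM, ha, hb, hc, hd, hθdef, pow_succ, pow_zero, one_mul, ← Real.exp_add]
    exact congrArg Real.exp (by ring)
  have m4 : M * Real.exp (-((2*α-1-2)*θ)) = c^2*a^2*b := by
    simp only [hM, ha, hb, hc, hd, hθdef, pow_succ, pow_zero, one_mul, ← Real.exp_add]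
    exact congrArg Real.exp (by ring)
  have m5 : M * Real.exp (3*θ) = c*d*b^3 := by
    simp only [hM, ha, hb, hc, hd, hθdef, pow_succ, pow_zero, one_mul, ← Real.exp_add]
    exact congrArg Real.exp (by ring)
  have m6 : M * Real.exp (-(3*θ)) = c*a^3*d := by
    simp only [hM, ha, hb, hc, hd, hθdef, pow_succ, pow_zero, one_mul, ← Real.exp_add]
    exact congrArg Real.exp (by ring)
  have m7 : M * Real.exp θ = c*a*d*b^2 := by
    simp only [hM, ha, hb, hc, hd, hθdef, pow_succ, pow_zero, one_mul, ← Real.exp_add]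
    exact congrArg Real.exp (by ring)
  have m8 : M * Real.exp (-θ) = c*a^2*d*b := by
    simp only [hM, ha, hb, hc, hd, hθdef, pow_succ, pow_zero, one_mul, ← Real.exp_add]
    exact congrArg Real.exp (by ring)
  have h1 : Real.exp (α*u) = c*a^2 := by
    simp only [hM, ha, hb, hc, hd, hθdef, pow_succ, pow_zero, one_mul, ← Real.exp_add]
    exact congrArg Real.exp (by ring)
  have h2 : Real.exp (α*v) = d*b^2 := by
    simp only [hM, ha, hb, hc, hd, hθdef, pow_succ, pow_zero, one_mul, ← Real.exp_add]
    exact congrArg Real.exp (by ring)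
  have h3 : Real.exp ((α-1)*u) = c*a := by
    simp only [hM, ha, hb, hc, hd, hθdef, pow_succ, pow_zero, one_mul, ← Real.exp_add]
    exact congrArg Real.exp (by ring)
  have h4 : Real.exp ((α-1)*v) = d*b := by
    simp only [hM, ha, hb, hc, hd, hθdef, pow_succ, pow_zero, one_mul, ← Real.exp_add]
    exact congrArg Real.exp (by ring)
  have hKEY : 0 ≤ 3*(d^2*b^3) - 3*(c^2*a^3) - (a*d^2*b^2) + (c^2*a^2*b)
      - (α-1)*(c*d*b^3) + (α-1)*(c*a^3*d) - (α+3)*(c*a*d*b^2) + (α+3)*(c*a^2*d*b) := by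
    have hexpand : 2 * M * (6*Real.sinh ((2*α-1)*θ) - 2*Real.sinh ((2*α-1-2)*θ)
        - (2*α-1-1)*Real.sinh (3*θ) - (2*α-1+7)*Real.sinh θ)
        = 2*(3*(d^2*b^3) - 3*(c^2*a^3) - (a*d^2*b^2) + (c^2*a^2*b)
          - (α-1)*(c*d*b^3) + (α-1)*(c*a^3*d) - (α+3)*(c*a*d*b^2) + (α+3)*(c*a^2*d*b)) := by
      rw [Real.sinh_eq, Real.sinh_eq, Real.sinh_eq, Real.sinh_eq]
      rw [show 2 * M * (6*((Real.exp ((2*α-1)*θ) - Real.exp (-((2*α-1)*θ)))/2)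
          - 2*((Real.exp ((2*α-1-2)*θ) - Real.exp (-((2*α-1-2)*θ)))/2)
          - (2*α-1-1)*((Real.exp (3*θ) - Real.exp (-(3*θ)))/2)
          - (2*α-1+7)*((Real.exp θ - Real.exp (-θ))/2))
        = 6*(M * Real.exp ((2*α-1)*θ)) - 6*(M * Real.exp (-((2*α-1)*θ)))
          - 2*(M * Real.exp ((2*α-1-2)*θ)) + 2*(M * Real.exp (-((2*α-1-2)*θ)))
          - (2*α-2)*(M * Real.exp (3*θ)) + (2*α-2)*(M * Real.exp (-(3*θ)))
          - (2*α+6)*(M * Real.exp θ) + (2*α+6)*(M * Real.exp (-θ)) from by ring]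
      rw [m1, m2, m3, m4, m5, m6, m7, m8]
      ring
    linarith [hexpand ▸ hprod]
  have hfin : (α * (Real.exp ((α-1)*v) - Real.exp ((α-1)*u))^2 * (Real.exp v - Real.exp u)
        + 2 * (Real.exp ((α-1)*v) - Real.exp ((α-1)*u)) * (Real.exp (α*u) + Real.exp (α*v)))
      - ((α-1) * (Real.exp ((α-2)*u) + Real.exp ((α-2)*v)) * (Real.exp v - Real.exp u)
        * (Real.exp (α*u) + Real.exp (α*v)))
      = 3*(d^2*b^3) - 3*(c^2*a^3) - (a*d^2*b^2) + (c^2*a^2*b)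
        - (α-1)*(c*d*b^3) + (α-1)*(c*a^3*d) - (α+3)*(c*a*d*b^2) + (α+3)*(c*a^2*d*b) := by
    rw [h1, h2, h3, h4]
    ring
  linarith [hfin ▸ hKEY]

private lemma core_pq (α p q : ℝ) (hα : 2 ≤ α) (hp : 0 < p) (hpq : p ≤ q) :
    (α-1) * (p^(α-2) + q^(α-2)) * (q - p) * (p^α + q^α)
      ≤ α * (q^(α-1) - p^(α-1))^2 * (q-p) + 2 * (q^(α-1) - p^(α-1)) * (p^α + q^α) := by
  have hq : 0 < q := lt_of_lt_of_le hp hpq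
  have h := core_exp α (Real.log p) (Real.log q) hα (Real.log_le_log hp hpq)
  simp only [mul_comm _ (Real.log p), mul_comm _ (Real.log q)] at h
  simp only [Real.exp_log hp, Real.exp_log hq, ← Real.rpow_def_of_pos hp,
    ← Real.rpow_def_of_pos hq] at h
  exact h

noncomputable def gfun (α t : ℝ) : ℝ :=
  ((1 - Real.sqrt (1-t))/2)^α + ((1 + Real.sqrt (1-t))/2)^α

noncomputable def g1fun (α t : ℝ) : ℝ :=
  (α * ((1 - Real.sqrt (1-t))/2)^(α-1) - α * ((1 + Real.sqrt (1-t))/2)^(α-1))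
    / (4*Real.sqrt (1-t))

noncomputable def g2fun (α t : ℝ) : ℝ :=
  α*(α-1)*(((1 - Real.sqrt (1-t))/2)^(α-2) + ((1 + Real.sqrt (1-t))/2)^(α-2)) / (16*Real.sqrt (1-t)^2)
  + α*(((1 - Real.sqrt (1-t))/2)^(α-1) - ((1 + Real.sqrt (1-t))/2)^(α-1))
      / (8*Real.sqrt (1-t)^3)

lemma gfun_pos (α : ℝ) {t : ℝ} (ht : 0 ≤ t) : 0 < gfun α t := by
  have h1 : Real.sqrt (1-t) ≤ 1 := by
    have h := Real.sqrt_le_sqrt (show 1-t ≤ 1 by linarith)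
    rwa [Real.sqrt_one] at h
  have hp : 0 ≤ (1 - Real.sqrt (1-t))/2 := by linarith
  have hq : 0 < (1 + Real.sqrt (1-t))/2 := by linarith [Real.sqrt_nonneg (1-t)]
  exact add_pos_of_nonneg_of_pos (Real.rpow_nonneg hp α) (Real.rpow_pos_of_pos hq α)

lemma gfun_cont (α : ℝ) (hα : 0 ≤ α) : Continuous (gfun α) := by
  have hb1 : Continuous fun t : ℝ => (1 - Real.sqrt (1-t))/2 := by fun_prop
  have hb2 : Continuous fun t : ℝ => (1 + Real.sqrt (1-t))/2 := by fun_prop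
  exact (hb1.rpow_const (fun x => Or.inr hα)).add (hb2.rpow_const (fun x => Or.inr hα))

lemma hasDerivAt_sqrt1t {t : ℝ} (h1t : 0 < 1 - t) :
    HasDerivAt (fun s : ℝ => Real.sqrt (1-s)) (-(1/(2*Real.sqrt (1-t)))) t := by
  have h := (Real.hasDerivAt_sqrt (ne_of_gt h1t)).comp t
    ((hasDerivAt_const t (1:ℝ)).sub (hasDerivAt_id t))
  exact h.congr_deriv (by simp)

lemma hasDerivAt_gfun (α : ℝ) {t : ℝ} (hα : 2 ≤ α) (ht : t ∈ Ioo (0:ℝ) 1) :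
    HasDerivAt (gfun α) (g1fun α t) t := by
  obtain ⟨ht0, ht1⟩ := ht
  have h1t : 0 < 1 - t := by linarith
  have hrpos : 0 < Real.sqrt (1-t) := Real.sqrt_pos.2 h1t
  have hsq : Real.sqrt (1-t)^2 = 1-t := Real.sq_sqrt h1t.le
  have hr1 : Real.sqrt (1-t) < 1 := by nlinarith
  have hp : 0 < (1 - Real.sqrt (1-t))/2 := by linarith
  have hq : 0 < (1 + Real.sqrt (1-t))/2 := by linarith
  have hds := hasDerivAt_sqrt1t h1t
  have hdp : HasDerivAt (fun s : ℝ => (1 - Real.sqrt (1-s))/2) (1/(4*Real.sqrt (1-t))) t := by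
    have h := ((hasDerivAt_const t (1:ℝ)).sub hds).div_const 2
    exact h.congr_deriv (by field_simp; ring)
  have hdq : HasDerivAt (fun s : ℝ => (1 + Real.sqrt (1-s))/2) (-(1/(4*Real.sqrt (1-t)))) t := by
    have h := ((hasDerivAt_const t (1:ℝ)).add hds).div_const 2
    exact h.congr_deriv (by field_simp; ring)
  have hdpα := (Real.hasDerivAt_rpow_const (p := α) (Or.inl hp.ne')).comp t hdp
  have hdqα := (Real.hasDerivAt_rpow_const (p := α) (Or.inl hq.ne')).comp t hdq
  have h := hdpα.add hdqα
  have hgoal : HasDerivAt (fun s => ((1 - Real.sqrt (1-s))/2)^α + ((1 + Real.sqrt (1-s))/2)^α)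
      (g1fun α t) t := by
    exact h.congr_deriv (by unfold g1fun; field_simp; ring)
  exact hgoal

lemma hasDerivAt_g1fun (α : ℝ) {t : ℝ} (hα : 2 ≤ α) (ht : t ∈ Ioo (0:ℝ) 1) :
    HasDerivAt (g1fun α) (g2fun α t) t := by
  obtain ⟨ht0, ht1⟩ := ht
  have h1t : 0 < 1 - t := by linarith
  have hrpos : 0 < Real.sqrt (1-t) := Real.sqrt_pos.2 h1t
  have hsq : Real.sqrt (1-t)^2 = 1-t := Real.sq_sqrt h1t.le
  have hr1 : Real.sqrt (1-t) < 1 := by nlinarith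
  have hp : 0 < (1 - Real.sqrt (1-t))/2 := by linarith
  have hq : 0 < (1 + Real.sqrt (1-t))/2 := by linarith
  have hds := hasDerivAt_sqrt1t h1t
  have hdp : HasDerivAt (fun s : ℝ => (1 - Real.sqrt (1-s))/2) (1/(4*Real.sqrt (1-t))) t := by
    have h := ((hasDerivAt_const t (1:ℝ)).sub hds).div_const 2
    exact h.congr_deriv (by field_simp; ring)
  have hdq : HasDerivAt (fun s : ℝ => (1 + Real.sqrt (1-s))/2) (-(1/(4*Real.sqrt (1-t)))) t := by
    have h := ((hasDerivAt_const t (1:ℝ)).add hds).div_const 2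
    exact h.congr_deriv (by field_simp; ring)
  have hnum : HasDerivAt
      (fun s => α * ((1 - Real.sqrt (1-s))/2)^(α-1) - α * ((1 + Real.sqrt (1-s))/2)^(α-1))
      (α*((α-1) * ((1 - Real.sqrt (1-t))/2)^(α-1-1) * (1/(4*Real.sqrt (1-t))))
        - α*((α-1) * ((1 + Real.sqrt (1-t))/2)^(α-1-1) * (-(1/(4*Real.sqrt (1-t)))))) t := by
    exact ((((Real.hasDerivAt_rpow_const (p := α-1) (Or.inl hp.ne')).comp t hdp).const_mul α).sub
      (((Real.hasDerivAt_rpow_const (p := α-1) (Or.inl hq.ne')).comp t hdq).const_mul α))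
  have hden : HasDerivAt (fun s : ℝ => 4*Real.sqrt (1-s)) (4*(-(1/(2*Real.sqrt (1-t))))) t :=
    hds.const_mul 4
  have hdiv := hnum.div hden (by positivity)
  have hgoal : HasDerivAt (g1fun α) ((
      (α*((α-1) * ((1 - Real.sqrt (1-t))/2)^(α-1-1) * (1/(4*Real.sqrt (1-t))))
        - α*((α-1) * ((1 + Real.sqrt (1-t))/2)^(α-1-1) * (-(1/(4*Real.sqrt (1-t))))))
      * (4*Real.sqrt (1-t))
      - (α * ((1 - Real.sqrt (1-t))/2)^(α-1) - α * ((1 + Real.sqrt (1-t))/2)^(α-1))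
        * (4*(-(1/(2*Real.sqrt (1-t)))))) / (4*Real.sqrt (1-t))^2) t := hdiv
  convert hgoal using 1
  unfold g2fun
  rw [show α-1-1 = α-2 by ring]
  field_simp
  rw [hsq.symm, Real.sqrt_sq (Real.sqrt_nonneg _)]
  ring

private lemma num_nonpos (α r : ℝ) (hα : 2 ≤ α) (hr0 : 0 < r) (hr1 : r < 1) :
    (α*(α-1)*(((1-r)/2)^(α-2) + ((1+r)/2)^(α-2)) / (16*r^2)
      + α*(((1-r)/2)^(α-1) - ((1+r)/2)^(α-1)) / (8*r^3)) * (((1-r)/2)^α + ((1+r)/2)^α)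
    - ((α * ((1-r)/2)^(α-1) - α * ((1+r)/2)^(α-1)) / (4*r))
      * ((α * ((1-r)/2)^(α-1) - α * ((1+r)/2)^(α-1)) / (4*r)) ≤ 0 := by
  have hp : 0 < (1-r)/2 := by linarith
  have hpq : (1-r)/2 ≤ (1+r)/2 := by linarith
  have hkey := core_pq α ((1-r)/2) ((1+r)/2) hα hp hpq
  have hident : (α*(α-1)*(((1-r)/2)^(α-2) + ((1+r)/2)^(α-2)) / (16*r^2)
      + α*(((1-r)/2)^(α-1) - ((1+r)/2)^(α-1)) / (8*r^3)) * (((1-r)/2)^α + ((1+r)/2)^α)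
    - ((α * ((1-r)/2)^(α-1) - α * ((1+r)/2)^(α-1)) / (4*r))
      * ((α * ((1-r)/2)^(α-1) - α * ((1+r)/2)^(α-1)) / (4*r))
    = -(α/(16*r^3) *
        ((α * (((1+r)/2)^(α-1) - ((1-r)/2)^(α-1))^2 * ((1+r)/2 - (1-r)/2)
          + 2 * (((1+r)/2)^(α-1) - ((1-r)/2)^(α-1)) * (((1-r)/2)^α + ((1+r)/2)^α))
        - (α-1) * (((1-r)/2)^(α-2) + ((1+r)/2)^(α-2)) * ((1+r)/2 - (1-r)/2)
            * (((1-r)/2)^α + ((1+r)/2)^α))) := by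
    field_simp
    ring
  rw [hident, neg_nonpos]
  apply mul_nonneg (by positivity)
  linarith [hkey]

lemma Hconcave (α : ℝ) (hα : 2 ≤ α) :
    ConcaveOn ℝ (Icc (0:ℝ) 1) (fun t => Real.log (gfun α t)) := by
  apply concaveOn_of_hasDerivWithinAt2_nonpos (convex_Icc 0 1)
    (f' := fun t => g1fun α t / gfun α t)
    (f'' := fun t => ((g2fun α t * gfun α t - g1fun α t * g1fun α t) / gfun α t ^ 2))
  · exact ContinuousOn.log ((gfun_cont α (by linarith)).continuousOn)
      (fun x hx => (gfun_pos α hx.1).ne')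
  · intro x hx
    rw [interior_Icc] at hx
    exact ((hasDerivAt_gfun α hα hx).log (gfun_pos α hx.1.le).ne').hasDerivWithinAt
  · intro x hx
    rw [interior_Icc] at hx
    exact ((hasDerivAt_g1fun α hα hx).div (hasDerivAt_gfun α hα hx)
      (gfun_pos α hx.1.le).ne').hasDerivWithinAt
  · intro x hx
    rw [interior_Icc] at hx
    obtain ⟨hx0, hx1⟩ := hx
    have h1t : 0 < 1 - x := by linarith
    have hrpos : 0 < Real.sqrt (1-x) := Real.sqrt_pos.2 h1t
    have hsq : Real.sqrt (1-x)^2 = 1-x := Real.sq_sqrt h1t.le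
    have hr1 : Real.sqrt (1-x) < 1 := by nlinarith
    apply div_nonpos_of_nonpos_of_nonneg _ (sq_nonneg _)
    have h := num_nonpos α (Real.sqrt (1-x)) hα hrpos hr1
    unfold gfun g1fun g2fun
    linarith [h]

lemma gfun_zero (α : ℝ) (hα : 2 ≤ α) : Real.log (gfun α 0) = 0 := by
  unfold gfun
  rw [show (1:ℝ) - 0 = 1 by ring, Real.sqrt_one]
  rw [show ((1:ℝ)-1)/2 = 0 by norm_num, show ((1:ℝ)+1)/2 = 1 by norm_num]
  rw [Real.zero_rpow (by linarith : α ≠ 0), Real.one_rpow]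
  norm_num

lemma H_subadd (α : ℝ) (hα : 2 ≤ α) {a b : ℝ} (ha : 0 ≤ a) (hb : 0 ≤ b) (hab : a + b ≤ 1) :
    Real.log (gfun α (a+b)) ≤ Real.log (gfun α a) + Real.log (gfun α b) := by
  have hconc := Hconcave α hα
  have hg0 := gfun_zero α hα
  rcases eq_or_lt_of_le ha with h0|hapos
  · rw [← h0, zero_add, hg0, zero_add]
  rcases eq_or_lt_of_le hb with h0b|hbpos
  · rw [← h0b, add_zero, hg0, add_zero]
  have hs : 0 < a + b := by linarith
  have hmem1 : a + b ∈ Icc (0:ℝ) 1 := ⟨by linarith, hab⟩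
  have hmem0 : (0:ℝ) ∈ Icc (0:ℝ) 1 := ⟨le_refl _, by norm_num⟩
  have w1 : 0 ≤ a/(a+b) := by positivity
  have w2 : 0 ≤ b/(a+b) := by positivity
  have wsum : a/(a+b) + b/(a+b) = 1 := by field_simp
  have wsum' : b/(a+b) + a/(a+b) = 1 := by field_simp; ring
  have c1 := hconc.2 hmem1 hmem0 w1 w2 wsum
  have c2 := hconc.2 hmem1 hmem0 w2 w1 wsum'
  simp only [smul_eq_mul, mul_zero, add_zero] at c1 c2
  rw [show a/(a+b)*(a+b) = a by field_simp, hg0, mul_zero, add_zero] at c1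
  rw [show b/(a+b)*(a+b) = b by field_simp, hg0, mul_zero, add_zero] at c2
  have hsum : a/(a+b) * Real.log (gfun α (a+b)) + b/(a+b) * Real.log (gfun α (a+b))
      = Real.log (gfun α (a+b)) := by
    rw [← add_mul, wsum, one_mul]
  linarith

theorem stmt_11 (α : ℝ) (hα : 2 ≤ α) (x y : ℝ) (hx : 0 ≤ x) (hy : 0 ≤ y)
    (hxy : x ^ 2 + y ^ 2 ≤ 1)
    (f : ℝ → ℝ)
    (hf : ∀ t, f t = (1 / (1 - α)) * Real.logb 2
      (((1 - Real.sqrt (1 - t ^ 2)) / 2) ^ α + ((1 + Real.sqrt (1 - t ^ 2)) / 2) ^ α)) :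
    f (Real.sqrt (x ^ 2 + y ^ 2)) ≥ f x + f y := by
  have hz : Real.sqrt (x^2+y^2) ^ 2 = x^2 + y^2 := Real.sq_sqrt (by positivity)
  rw [hf, hf, hf, hz]
  have hkey := H_subadd α hα (sq_nonneg x) (sq_nonneg y) hxy
  have hgx := gfun_pos α (sq_nonneg x)
  have hgy := gfun_pos α (sq_nonneg y)
  have hgz := gfun_pos α (t := x^2 + y^2) (by positivity)
  have hlog2 : 0 < Real.log 2 := Real.log_pos (by norm_num)
  have h1α : 1 - α < 0 := by linarith
  have hc : 1/(1-α) < 0 := div_neg_of_pos_of_neg one_pos h1α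
  show (1:ℝ)/(1-α) * Real.logb 2 (gfun α (x^2+y^2))
      ≥ 1/(1-α) * Real.logb 2 (gfun α (x^2)) + 1/(1-α) * Real.logb 2 (gfun α (y^2))
  have hkey2 : Real.logb 2 (gfun α (x^2+y^2))
      ≤ Real.logb 2 (gfun α (x^2)) + Real.logb 2 (gfun α (y^2)) := by
    simp only [← Real.log_div_log]
    rw [← add_div]
    exact (div_le_div_iff_of_pos_right hlog2).2 hkey
  rw [ge_iff_le, ← mul_add]
  exact mul_le_mul_of_nonpos_left hkey2 hc.le
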